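/- If ad < bc, then Δ_Δ > 0, Δ_g > 0, and u ≤ x_Δ^− < −b/a < x_Δ^+ < v < 0. If ad = bc, then u < −b/a = x_Δ^+ < v < 0. -/

import Mathlib

open Polynomial

set_option maxHeartbeats 1000000

private lemma quadPosUp (e p q x g : ℝ) (he : 0 < e)
    (hf : e * (x - p) * (x - q) = g) (hg : 0 < g) (hx : x < q) : x < p := by
  have hX : 0 < (x - p) * (x - q) := by nlinarith
  nlinarith [hX, hx]

private lemma quadPosDown (e p q x g : ℝ) (he : e < 0)
    (hf : e * (x - p) * (x - q) = g) (hg : 0 < g) (hpq : p ≤ q) : x < q := by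
  have hX : (x - p) * (x - q) < 0 := by nlinarith
  nlinarith [hX]

private lemma quadNonnegDown (e p q x g : ℝ) (he : e < 0)
    (hf : e * (x - p) * (x - q) = g) (hg : 0 ≤ g) (hpq : p ≤ q) : p ≤ x := by
  have hX : (x - p) * (x - q) ≤ 0 := by nlinarith
  nlinarith [hX]

private lemma rootSignsUp (e m p d : ℝ) (he : 0 < e) (hd : 0 < d)
    (hprod : e * (m * p) = -d) (hmp : m ≤ p) : m < 0 ∧ 0 < p := by
  have hmp0 : m * p < 0 := by nlinarith
  have hp : 0 < p := by nlinarith [hmp0, sq_nonneg p]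
  exact ⟨by nlinarith [hmp0, hp], hp⟩

private lemma rootSignsDown (e m p d s : ℝ) (he : e < 0) (hd : 0 < d) (hs : 0 < s)
    (hsum : e * (m + p) = s) (hprod : e * (m * p) = -d) (hmp : m ≤ p) : p < 0 := by
  have h1 : m + p < 0 := by nlinarith
  have h2 : 0 < m * p := by nlinarith
  nlinarith [h1, h2]

private lemma noTangent (a b c d xdp : ℝ) (ha : 0 < a) (hb : 0 < b) (hd : 0 < d)
    (hdp : a ^ 2 * xdp ^ 2 + (2 * a * b + 4 * c) * xdp + (b ^ 2 + 4 * d) = 0)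
    (hTge : -(a * b) - 2 * c ≤ a ^ 2 * xdp)
    (had : a * d ≤ b * c) (h2 : 2 < a)
    (hx : (2 - a) * xdp = b) : False := by
  have he : (0:ℝ) < a - 2 := by linarith
  have hxv : xdp * (a - 2) = -b := by linear_combination -hx
  have hE1 : b ^ 2 + d * (a - 2) ^ 2 = b * c * (a - 2) := by
    linear_combination ((a - 2) ^ 2 / 4) * hdp +
      (-(1 / 4) * (a ^ 2 * (xdp * (a - 2) + b) - 2 * a ^ 2 * b +
        (2 * a * b + 4 * c) * (a - 2))) * hxv
  have h5 : a ^ 2 * xdp * (a - 2) = -(a ^ 2 * b) := by linear_combination a ^ 2 * hxv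
  have hE2 : a * b ≤ c * (a - 2) := by
    nlinarith [mul_le_mul_of_nonneg_right hTge he.le, h5]
  have hE3 : b ^ 2 * (a - 1) ≤ d * (a - 2) ^ 2 := by
    nlinarith [mul_le_mul_of_nonneg_right hE2 hb.le]
  have hE4 : 2 * d * (a - 2) ≤ b ^ 2 := by
    nlinarith [mul_le_mul_of_nonneg_right had he.le]
  nlinarith [mul_le_mul_of_nonneg_right hE4 (by linarith : (0:ℝ) ≤ a - 1),
    mul_pos (mul_pos hd he) ha]

private theorem stmt_11_aux (a b c d : ℝ) (ha : 0 < a) (hb : 0 < b) (hc : 0 < c) (hd : 0 < d)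
    (DD Dg : ℝ)
    (hDD : DD = -a ^ 2 * d + a * b * c + c ^ 2)
    (hDg : Dg = (b + c) ^ 2 + 4 * d * (1 - a))
    (xdm xdp xgm xgp u v : ℝ)
    (hxdm : xdm = (-(a * b) - 2 * c - 2 * Real.sqrt DD) / a ^ 2)
    (hxdp : xdp = (-(a * b) - 2 * c + 2 * Real.sqrt DD) / a ^ 2)
    (hxgm : xgm = if a = 1 then -d / (b + c)
      else (b + c) / (2 * (1 - a)) - Real.sqrt Dg / (2 * |1 - a|))
    (hxgp : xgp = if a = 1 then -d / (b + c)
      else (b + c) / (2 * (1 - a)) + Real.sqrt Dg / (2 * |1 - a|))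
    (hu : u = if a ≤ 2 then xdm else xgm)
    (hv : v = if a ≤ 1 then xgm else xgp)
    (had : a * d ≤ b * c) :
    0 < DD ∧ 0 < Dg ∧ u ≤ xdm ∧ xdm < -b / a ∧ xdp < v ∧ v < 0 := by
  have hDDpos : 0 < DD := by
    nlinarith [mul_nonneg ha.le (sub_nonneg.mpr had), pow_pos hc 2]
  have hDgpos : 0 < Dg := by nlinarith [sq_nonneg (b - c)]
  have hs : Real.sqrt DD ^ 2 = DD := Real.sq_sqrt hDDpos.le
  have hsnn : 0 ≤ Real.sqrt DD := Real.sqrt_nonneg _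
  have hr : Real.sqrt Dg ^ 2 = Dg := Real.sq_sqrt hDgpos.le
  have hrnn : 0 ≤ Real.sqrt Dg := Real.sqrt_nonneg _
  have h2s : Real.sqrt DD < (a * b + 2 * c) / 2 := by
    rw [Real.sqrt_lt' (by positivity), hDD]
    nlinarith [mul_pos (mul_pos ha ha) hd, sq_nonneg (a * b)]
  have hxdp_neg : xdp < 0 := by
    rw [hxdp]; apply div_neg_of_neg_of_pos; linarith; positivity
  have hxdm_lt : xdm < -b / a := by
    rw [hxdm, div_lt_div_iff₀ (by positivity) ha]
    nlinarith [mul_pos ha hc, mul_nonneg ha.le hsnn]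
  have hT : a ^ 2 * xdp = -(a * b) - 2 * c + 2 * Real.sqrt DD := by
    rw [hxdp]; field_simp
  have hdp : a ^ 2 * xdp ^ 2 + (2 * a * b + 4 * c) * xdp + (b ^ 2 + 4 * d) = 0 := by
    have ha2 : (a:ℝ) ^ 2 ≠ 0 := by positivity
    field_simp [hxdp]
    apply mul_left_cancel₀ ha2
    linear_combination (a ^ 2 * xdp + (-(a * b) - 2 * c + 2 * Real.sqrt DD) + 2 * a * b + 4 * c) * hT + 4 * hs + 4 * hDD
  have hdm : a ^ 2 * xdm ^ 2 + (2 * a * b + 4 * c) * xdm + (b ^ 2 + 4 * d) = 0 := by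
    have ha2 : (a:ℝ) ^ 2 ≠ 0 := by positivity
    field_simp [hxdm]
    have hTm : a ^ 2 * xdm = -(a * b) - 2 * c - 2 * Real.sqrt DD := by
      rw [hxdm]; field_simp
    apply mul_left_cancel₀ ha2
    linear_combination (a ^ 2 * xdm + (-(a * b) - 2 * c - 2 * Real.sqrt DD) + 2 * a * b + 4 * c) * hTm + 4 * hs + 4 * hDD
  have h4gp : 4 * ((1 - a) * xdp ^ 2 - (b + c) * xdp - d) = ((2 - a) * xdp - b) ^ 2 := by
    linear_combination -hdp
  have h4gm : 4 * ((1 - a) * xdm ^ 2 - (b + c) * xdm - d) = ((2 - a) * xdm - b) ^ 2 := by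
    linear_combination -hdm
  -- g(xdp) > 0
  have hgp : 0 < (1 - a) * xdp ^ 2 - (b + c) * xdp - d := by
    rcases le_or_gt a 2 with h2 | h2
    · have hlt : (2 - a) * xdp - b < 0 := by
        have := mul_nonpos_of_nonneg_of_nonpos (by linarith : (0:ℝ) ≤ 2 - a) hxdp_neg.le
        linarith
      have hsq : 0 < ((2 - a) * xdp - b) ^ 2 :=
        lt_of_le_of_ne (sq_nonneg _) (Ne.symm (pow_ne_zero 2 hlt.ne))
      linarith [h4gp, hsq]
    · have hne0 : (2 - a) * xdp - b ≠ 0 := by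
        intro h0
        exact noTangent a b c d xdp ha hb hd hdp (by rw [hT]; linarith) had h2 (by linarith)
      have hsq : 0 < ((2 - a) * xdp - b) ^ 2 :=
        lt_of_le_of_ne (sq_nonneg _) (Ne.symm (pow_ne_zero 2 hne0))
      linarith [h4gp, hsq]
  rcases lt_trichotomy a 1 with h1 | h1 | h1
  · -- a < 1
    have habs : |1 - a| = 1 - a := abs_of_pos (by linarith)
    have hane : ¬ a = 1 := by intro h; linarith
    rw [if_neg hane] at hxgm hxgp
    have hne : (1:ℝ) - a ≠ 0 := by intro h; linarith
    have hsum : (1 - a) * (xgm + xgp) = b + c := by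
      rw [hxgm, hxgp, habs]; field_simp; ring
    have hq : xgm * xgp = ((b + c) ^ 2 - Dg) / (4 * (1 - a) ^ 2) := by
      rw [hxgm, hxgp, habs]; field_simp
      linear_combination (-(4:ℝ)) * hr
    have hprod : (1 - a) * (xgm * xgp) = -d := by
      rw [hq, hDg]; field_simp; ring
    have hgmgp : xgm ≤ xgp := by
      rw [hxgm, hxgp, habs]
      have : 0 ≤ Real.sqrt Dg / (2 * (1 - a)) := div_nonneg hrnn (by linarith)
      linarith
    obtain ⟨hxgm_neg, hxgp_pos⟩ :=
      rootSignsUp (1 - a) xgm xgp d (by linarith) hd hprod hgmgp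
    have hfacp : (1 - a) * (xdp - xgm) * (xdp - xgp) =
        (1 - a) * xdp ^ 2 - (b + c) * xdp - d := by
      linear_combination (-xdp) * hsum + hprod
    have hpv : xdp < xgm :=
      quadPosUp (1 - a) xgm xgp xdp _ (by linarith) hfacp hgp (by linarith)
    have hvx : v = xgm := by rw [hv, if_pos h1.le]
    have hux : u = xdm := by rw [hu, if_pos (by linarith)]
    exact ⟨hDDpos, hDgpos, hux.le, hxdm_lt, hvx ▸ hpv, hvx ▸ hxgm_neg⟩
  · -- a = 1
    subst h1
    rw [if_pos rfl] at hxgm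
    have hbc : (0:ℝ) < b + c := by linarith
    have hv0 : xgm < 0 := by
      rw [hxgm]; apply div_neg_of_neg_of_pos; linarith; exact hbc
    have hpv : xdp < xgm := by
      rw [hxgm, lt_div_iff₀ hbc]
      linarith [hgp]
    have hvx : v = xgm := by rw [hv, if_pos le_rfl]
    have hux : u = xdm := by rw [hu, if_pos (by norm_num)]
    exact ⟨hDDpos, hDgpos, hux.le, hxdm_lt, hvx ▸ hpv, hvx ▸ hv0⟩
  · -- 1 < a
    have habs : |1 - a| = a - 1 := by rw [abs_of_neg (by linarith)]; ring
    have hane : ¬ a = 1 := by intro h; linarith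
    rw [if_neg hane] at hxgm hxgp
    have hne : (1:ℝ) - a ≠ 0 := by intro h; linarith
    have hne' : a - 1 ≠ 0 := by intro h; linarith
    have hsum : (1 - a) * (xgm + xgp) = b + c := by
      rw [hxgm, hxgp, habs]; field_simp; ring
    have hq : xgm * xgp = ((b + c) ^ 2 - Dg) / (4 * (1 - a) ^ 2) := by
      rw [hxgm, hxgp, habs]; field_simp
      linear_combination (-(4:ℝ) * (a - 1) ^ 2) * hr
    have hprod : (1 - a) * (xgm * xgp) = -d := by
      rw [hq, hDg]; field_simp; ring
    have hgmgp : xgm ≤ xgp := by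
      rw [hxgm, hxgp, habs]
      have : 0 ≤ Real.sqrt Dg / (2 * (a - 1)) := div_nonneg hrnn (by linarith)
      linarith
    have hxgp_neg : xgp < 0 :=
      rootSignsDown (1 - a) xgm xgp d (b + c) (by linarith) hd (by linarith) hsum hprod hgmgp
    have hfacp : (1 - a) * (xdp - xgm) * (xdp - xgp) =
        (1 - a) * xdp ^ 2 - (b + c) * xdp - d := by
      linear_combination (-xdp) * hsum + hprod
    have hpv : xdp < xgp :=
      quadPosDown (1 - a) xgm xgp xdp _ (by linarith) hfacp hgp hgmgp
    have hvx : v = xgp := by rw [hv, if_neg (by linarith)]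
    have hum : u ≤ xdm := by
      rcases le_or_gt a 2 with h2 | h2
      · rw [hu, if_pos h2]
      · rw [hu, if_neg (not_le.mpr h2)]
        have hgm : 0 ≤ (1 - a) * xdm ^ 2 - (b + c) * xdm - d := by
          linarith [h4gm, sq_nonneg ((2 - a) * xdm - b)]
        have hfacm : (1 - a) * (xdm - xgm) * (xdm - xgp) =
            (1 - a) * xdm ^ 2 - (b + c) * xdm - d := by
          linear_combination (-xdm) * hsum + hprod
        exact quadNonnegDown (1 - a) xgm xgp xdm _ (by linarith) hfacm hgm hgmgp
    exact ⟨hDDpos, hDgpos, hum, hxdm_lt, hvx ▸ hpv, hvx ▸ hxgp_neg⟩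

/-- If `a*d < b*c`, then `ΔΔ > 0`, `Δg > 0`, and
`u ≤ xΔ⁻ < -b/a < xΔ⁺ < v < 0`. If `a*d = b*c`, then
`u < -b/a = xΔ⁺ < v < 0`. -/
theorem stmt_11 (a b c d : ℝ) (ha : 0 < a) (hb : 0 < b) (hc : 0 < c) (hd : 0 < d)
    (W : ℕ → Polynomial ℝ)
    (hW0 : W 0 = 1) (hW1 : W 1 = X)
    (hW : ∀ n : ℕ, W (n + 2) = (C a * X + C b) * W (n + 1) + (C c * X + C d) * W n)
    (DD Dg : ℝ)
    (hDD : DD = -a ^ 2 * d + a * b * c + c ^ 2)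
    (hDg : Dg = (b + c) ^ 2 + 4 * d * (1 - a))
    (xdm xdp xgm xgp u v : ℝ)
    (hxdm : xdm = (-(a * b) - 2 * c - 2 * Real.sqrt DD) / a ^ 2)
    (hxdp : xdp = (-(a * b) - 2 * c + 2 * Real.sqrt DD) / a ^ 2)
    (hxgm : xgm = if a = 1 then -d / (b + c)
      else (b + c) / (2 * (1 - a)) - Real.sqrt Dg / (2 * |1 - a|))
    (hxgp : xgp = if a = 1 then -d / (b + c)
      else (b + c) / (2 * (1 - a)) + Real.sqrt Dg / (2 * |1 - a|))
    (hu : u = if a ≤ 2 then xdm else xgm)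
    (hv : v = if a ≤ 1 then xgm else xgp) :
    (a * d < b * c →
      0 < DD ∧ 0 < Dg ∧
      u ≤ xdm ∧ xdm < -b / a ∧ -b / a < xdp ∧ xdp < v ∧ v < 0) ∧
    (a * d = b * c →
      u < -b / a ∧ -b / a = xdp ∧ xdp < v ∧ v < 0) := by
  constructor
  · intro hlt
    obtain ⟨hDD', hDg', hum, hmb, hpv, hv0⟩ :=
      stmt_11_aux a b c d ha hb hc hd DD Dg hDD hDg xdm xdp xgm xgp u v
        hxdm hxdp hxgm hxgp hu hv hlt.le
    refine ⟨hDD', hDg', hum, hmb, ?_, hpv, hv0⟩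
    have hs : Real.sqrt DD ^ 2 = DD := Real.sq_sqrt hDD'.le
    have hsnn : 0 ≤ Real.sqrt DD := Real.sqrt_nonneg _
    have hcs : c < Real.sqrt DD := by
      nlinarith [hs, hsnn, mul_pos ha (sub_pos.mpr hlt)]
    rw [hxdp, div_lt_div_iff₀ ha (by positivity : (0:ℝ) < a ^ 2)]
    nlinarith [mul_pos ha (sub_pos.mpr hcs)]
  · intro heq
    obtain ⟨hDD', hDg', hum, hmb, hpv, hv0⟩ :=
      stmt_11_aux a b c d ha hb hc hd DD Dg hDD hDg xdm xdp xgm xgp u v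
        hxdm hxdp hxgm hxgp hu hv heq.le
    have hDDc : DD = c ^ 2 := by rw [hDD]; linear_combination (-a) * heq
    have hsc : Real.sqrt DD = c := by rw [hDDc]; exact Real.sqrt_sq hc.le
    have hbd : -b / a = xdp := by
      rw [hxdp, hsc]; field_simp; ring
    exact ⟨lt_of_le_of_lt hum hmb, hbd, hpv, hv0⟩
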